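/- Let A be a commutative ring with a derivation d : A → A, and for v ∈ A let σ_v be the A-algebra endomorphism of the polynomial ring A[T] determined by σ_v(T) = T + v. Then σ_v intertwines the canonical bracket: for all f, g ∈ A[T], {σ_v f, σ_v g}_0 = σ_v({f,g}_0), where {f,g}_0 := ∂_T f · D g − D f · ∂_T g, with ∂_T the formal T-derivative and D the derivation of A[T] extending d with D(T) = 0. -/
import Mathlib


open Polynomial

variable {A : Type*} [CommRing A]

/-- The derivation `D` of `A[T]` extending `d : A → A` coefficientwise, with `D(T) = 0`. -/
noncomputable def cderP (d : A → A) (f : A[X]) : A[X] :=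
  f.sum fun n a => C (d a) * X ^ n

lemma d_zero (d : A → A) (hd_add : ∀ a b : A, d (a + b) = d a + d b) : d 0 = 0 := by
  have h := hd_add 0 0
  simpa using h

lemma d_one (d : A → A) (hd_mul : ∀ a b : A, d (a * b) = a * d b + d a * b) : d 1 = 0 := by
  have h := hd_mul 1 1
  simpa using h

lemma cderP_monomial (d : A → A) (hd_add : ∀ a b : A, d (a + b) = d a + d b)
    (n : ℕ) (a : A) :
    cderP d (monomial n a) = C (d a) * X ^ n := by
  rw [cderP, sum_monomial_index]
  rw [d_zero d hd_add]; simp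

lemma cderP_C (d : A → A) (hd_add : ∀ a b : A, d (a + b) = d a + d b) (a : A) :
    cderP d (C a) = C (d a) := by
  rw [← monomial_zero_left, cderP_monomial d hd_add]; simp

lemma cderP_add (d : A → A) (hd_add : ∀ a b : A, d (a + b) = d a + d b) (f g : A[X]) :
    cderP d (f + g) = cderP d f + cderP d g := by
  rw [cderP, cderP, cderP, sum_add_index]
  · intro n; rw [d_zero d hd_add]; simp
  · intro n a b; rw [hd_add]; push_cast [C_add]; ring

lemma cderP_mul (d : A → A) (hd_add : ∀ a b : A, d (a + b) = d a + d b)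
    (hd_mul : ∀ a b : A, d (a * b) = a * d b + d a * b) (f g : A[X]) :
    cderP d (f * g) = f * cderP d g + cderP d f * g := by
  induction f using Polynomial.induction_on' with
  | add p q hp hq =>
    rw [add_mul, cderP_add d hd_add, hp, hq, cderP_add d hd_add]; ring
  | monomial m a =>
    induction g using Polynomial.induction_on' with
    | add p q hp hq =>
      rw [mul_add, cderP_add d hd_add, hp, hq, cderP_add d hd_add]; ring
    | monomial n b =>
      rw [monomial_mul_monomial, cderP_monomial d hd_add,
        cderP_monomial d hd_add, cderP_monomial d hd_add, hd_mul,
        ← C_mul_X_pow_eq_monomial, ← C_mul_X_pow_eq_monomial]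
      push_cast [C_add, C_mul]
      ring

lemma cderP_X (d : A → A) (hd_add : ∀ a b : A, d (a + b) = d a + d b)
    (hd_mul : ∀ a b : A, d (a * b) = a * d b + d a * b) :
    cderP d (X : A[X]) = 0 := by
  rw [← monomial_one_one_eq_X, cderP_monomial d hd_add, d_one d hd_mul]; simp

/-- Key lemma: how `cderP` interacts with the shift `T ↦ T + v`. -/
lemma cderP_aeval (d : A → A) (hd_add : ∀ a b : A, d (a + b) = d a + d b)
    (hd_mul : ∀ a b : A, d (a * b) = a * d b + d a * b) (v : A) (f : A[X]) :
    cderP d (aeval (X + C v) f) =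
      aeval (X + C v) (cderP d f) + C (d v) * aeval (X + C v) (derivative f) := by
  have hXv : cderP d (X + C v : A[X]) = C (d v) := by
    rw [cderP_add d hd_add, cderP_X d hd_add hd_mul, cderP_C d hd_add]; simp
  induction f using Polynomial.induction_on with
  | C a =>
    simp [cderP_C d hd_add]
  | add p q hp hq =>
    rw [map_add, cderP_add d hd_add, hp, hq, derivative_add,
      cderP_add d hd_add, map_add, map_add]
    ring
  | monomial n a ih =>
    have step : (C a * X ^ (n + 1) : A[X]) = (C a * X ^ n) * X := by ring
    rw [step, derivative_mul, derivative_X,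
      cderP_mul d hd_add hd_mul (C a * X ^ n) X, cderP_X d hd_add hd_mul,
      map_mul, aeval_X, cderP_mul d hd_add hd_mul, hXv, ih]
    simp only [map_add, map_mul, map_one, aeval_X, aeval_C, mul_zero,
      map_zero, C_0, zero_mul]
    ring

lemma derivative_aeval_shift (v : A) (f : A[X]) :
    derivative (aeval (X + C v) f) = aeval (X + C v) (derivative f) := by
  rw [← comp_eq_aeval, ← comp_eq_aeval, derivative_comp]
  simp

/-- The canonical bracket `{f,g}_0 := ∂_T f · D g − D f · ∂_T g` on `A[T]`. -/
noncomputable def pbr (d : A → A) (f g : A[X]) : A[X] :=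
  derivative f * cderP d g - cderP d f * derivative g

/-- The `A`-algebra endomorphism `σ_v` of `A[T]` determined by `σ_v(T) = T + v`
intertwines the canonical bracket: `{σ_v f, σ_v g}_0 = σ_v({f,g}_0)`. -/
theorem shift_preserves_bracket (d : A → A)
    (hd_add : ∀ a b : A, d (a + b) = d a + d b)
    (hd_mul : ∀ a b : A, d (a * b) = a * d b + d a * b)
    (v : A) (f g : A[X]) :
    pbr d (aeval (X + C v) f) (aeval (X + C v) g) = aeval (X + C v) (pbr d f g) := by
  simp only [pbr, cderP_aeval d hd_add hd_mul v, derivative_aeval_shift,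
    map_sub, map_mul]
  ring
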